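/- arXiv:1108.4982 — 2 statements merged into one kernel-verified Lean document; each statement's English description precedes it below -/
import Mathlib

section
/- Let Φ be a real symmetric positive definite n×n matrix, η a real number, 𝒜 a real n×n matrix, ℬ a real n×m matrix, 𝒞 a real p×n matrix, and 𝒟 a real p×m matrix. Then the symmetric 2×2 block matrix with block rows [𝒜ᵀΦ𝒜 − Φ + 𝒞ᵀ𝒞, 𝒜ᵀΦℬ + 𝒞ᵀ𝒟], [ℬᵀΦ𝒜 + 𝒟ᵀ𝒞, ℬᵀΦℬ + 𝒟ᵀ𝒟 − η·I_m] is negative definite if and only if the symmetric 4×4 block matrix with block rows [−Φ, 0, 𝒜ᵀ, 𝒞ᵀ], [0, −η·I_m, ℬᵀ, 𝒟ᵀ], [𝒜, ℬ, −Φ⁻¹, 0], [𝒞, 𝒟, 0, −I_p] is negative definite. -/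
open Matrix

/-- A real matrix is negative definite if its negation is positive definite. -/
def Matrix.NegDef {n : Type*} [Fintype n] (M : Matrix n n ℝ) : Prop := (-M).PosDef

section Blocks

variable {R i1 i2 i3 i4 i5 i6 j1 j2 j3 j4 j5 j6 : Type*}

/-- Assemble a 3×3 block matrix from its blocks. -/
def blk3 (A11 : Matrix i1 j1 R) (A12 : Matrix i1 j2 R) (A13 : Matrix i1 j3 R)
    (A21 : Matrix i2 j1 R) (A22 : Matrix i2 j2 R) (A23 : Matrix i2 j3 R)
    (A31 : Matrix i3 j1 R) (A32 : Matrix i3 j2 R) (A33 : Matrix i3 j3 R) :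
    Matrix (i1 ⊕ (i2 ⊕ i3)) (j1 ⊕ (j2 ⊕ j3)) R :=
  fromBlocks A11 (fromCols A12 A13) (fromRows A21 A31) (fromBlocks A22 A23 A32 A33)

/-- Assemble a 4×4 block matrix from its blocks. -/
def blk4 (A11 : Matrix i1 j1 R) (A12 : Matrix i1 j2 R) (A13 : Matrix i1 j3 R) (A14 : Matrix i1 j4 R)
    (A21 : Matrix i2 j1 R) (A22 : Matrix i2 j2 R) (A23 : Matrix i2 j3 R) (A24 : Matrix i2 j4 R)
    (A31 : Matrix i3 j1 R) (A32 : Matrix i3 j2 R) (A33 : Matrix i3 j3 R) (A34 : Matrix i3 j4 R)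
    (A41 : Matrix i4 j1 R) (A42 : Matrix i4 j2 R) (A43 : Matrix i4 j3 R) (A44 : Matrix i4 j4 R) :
    Matrix (i1 ⊕ (i2 ⊕ (i3 ⊕ i4))) (j1 ⊕ (j2 ⊕ (j3 ⊕ j4))) R :=
  fromBlocks A11 (fromCols A12 (fromCols A13 A14))
    (fromRows A21 (fromRows A31 A41)) (blk3 A22 A23 A24 A32 A33 A34 A42 A43 A44)

/-- Assemble a 5×5 block matrix from its blocks. -/
def blk5 (A11 : Matrix i1 j1 R) (A12 : Matrix i1 j2 R) (A13 : Matrix i1 j3 R) (A14 : Matrix i1 j4 R)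
    (A15 : Matrix i1 j5 R)
    (A21 : Matrix i2 j1 R) (A22 : Matrix i2 j2 R) (A23 : Matrix i2 j3 R) (A24 : Matrix i2 j4 R)
    (A25 : Matrix i2 j5 R)
    (A31 : Matrix i3 j1 R) (A32 : Matrix i3 j2 R) (A33 : Matrix i3 j3 R) (A34 : Matrix i3 j4 R)
    (A35 : Matrix i3 j5 R)
    (A41 : Matrix i4 j1 R) (A42 : Matrix i4 j2 R) (A43 : Matrix i4 j3 R) (A44 : Matrix i4 j4 R)
    (A45 : Matrix i4 j5 R)
    (A51 : Matrix i5 j1 R) (A52 : Matrix i5 j2 R) (A53 : Matrix i5 j3 R) (A54 : Matrix i5 j4 R)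
    (A55 : Matrix i5 j5 R) :
    Matrix (i1 ⊕ (i2 ⊕ (i3 ⊕ (i4 ⊕ i5)))) (j1 ⊕ (j2 ⊕ (j3 ⊕ (j4 ⊕ j5)))) R :=
  fromBlocks A11 (fromCols A12 (fromCols A13 (fromCols A14 A15)))
    (fromRows A21 (fromRows A31 (fromRows A41 A51)))
    (blk4 A22 A23 A24 A25 A32 A33 A34 A35 A42 A43 A44 A45 A52 A53 A54 A55)

/-- Assemble a 6×6 block matrix from its blocks. -/
def blk6 (A11 : Matrix i1 j1 R) (A12 : Matrix i1 j2 R) (A13 : Matrix i1 j3 R) (A14 : Matrix i1 j4 R)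
    (A15 : Matrix i1 j5 R) (A16 : Matrix i1 j6 R)
    (A21 : Matrix i2 j1 R) (A22 : Matrix i2 j2 R) (A23 : Matrix i2 j3 R) (A24 : Matrix i2 j4 R)
    (A25 : Matrix i2 j5 R) (A26 : Matrix i2 j6 R)
    (A31 : Matrix i3 j1 R) (A32 : Matrix i3 j2 R) (A33 : Matrix i3 j3 R) (A34 : Matrix i3 j4 R)
    (A35 : Matrix i3 j5 R) (A36 : Matrix i3 j6 R)
    (A41 : Matrix i4 j1 R) (A42 : Matrix i4 j2 R) (A43 : Matrix i4 j3 R) (A44 : Matrix i4 j4 R)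
    (A45 : Matrix i4 j5 R) (A46 : Matrix i4 j6 R)
    (A51 : Matrix i5 j1 R) (A52 : Matrix i5 j2 R) (A53 : Matrix i5 j3 R) (A54 : Matrix i5 j4 R)
    (A55 : Matrix i5 j5 R) (A56 : Matrix i5 j6 R)
    (A61 : Matrix i6 j1 R) (A62 : Matrix i6 j2 R) (A63 : Matrix i6 j3 R) (A64 : Matrix i6 j4 R)
    (A65 : Matrix i6 j5 R) (A66 : Matrix i6 j6 R) :
    Matrix (i1 ⊕ (i2 ⊕ (i3 ⊕ (i4 ⊕ (i5 ⊕ i6))))) (j1 ⊕ (j2 ⊕ (j3 ⊕ (j4 ⊕ (j5 ⊕ j6))))) R :=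
  fromBlocks A11 (fromCols A12 (fromCols A13 (fromCols A14 (fromCols A15 A16))))
    (fromRows A21 (fromRows A31 (fromRows A41 (fromRows A51 A61))))
    (blk5 A22 A23 A24 A25 A26 A32 A33 A34 A35 A36 A42 A43 A44 A45 A46
      A52 A53 A54 A55 A56 A62 A63 A64 A65 A66)

end Blocks

section aux
variable {m n : Type*} [Fintype m] [Fintype n]

lemma posDef_submatrix' {N : Matrix n n ℝ} (hN : N.PosDef) (f : m ≃ n) :
    (N.submatrix f f).PosDef := by
    rw [posDef_iff_dotProduct_mulVec] at hN ⊢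
    refine ⟨hN.1.submatrix f, fun x hx => ?_⟩
    have hq : star x ⬝ᵥ (N.submatrix f f *ᵥ x) =
        star (x ∘ f.symm) ⬝ᵥ (N *ᵥ (x ∘ f.symm)) := by
      rw [submatrix_mulVec_equiv]
      exact Fintype.sum_equiv f _ _ fun i => by simp
    rw [hq]
    refine hN.2 fun h0 => hx ?_
    funext i
    simpa using congrFun h0 (f i)

lemma posDef_submatrix_equiv' {M : Matrix n n ℝ} (e : m ≃ n) :
    (M.submatrix e e).PosDef ↔ M.PosDef := by
  constructor
  · intro h
    have := posDef_submatrix' h e.symm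
    simpa using this
  · intro h
    exact posDef_submatrix' h e

lemma posDef_fromBlocks₂₂' [DecidableEq n] (A : Matrix m m ℝ) (B : Matrix m n ℝ)
    {D : Matrix n n ℝ} (hD : D.PosDef) :
    (fromBlocks A B Bᴴ D).PosDef ↔ (A - B * D⁻¹ * Bᴴ).PosDef := by
  haveI : Invertible D := hD.isUnit.invertible
  rw [posDef_iff_dotProduct_mulVec, posDef_iff_dotProduct_mulVec]
  constructor
  · intro h
    refine ⟨(Matrix.IsHermitian.fromBlocks₂₂ A B hD.1).mp h.1, fun x hx => ?_⟩
    have hz : Sum.elim x (-((D⁻¹ * Bᴴ) *ᵥ x)) ≠ 0 := fun h0 => hx (funext fun i => congrFun h0 (Sum.inl i))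
    have := h.2 hz
    rw [dotProduct_mulVec, schur_complement_eq₂₂ A B x (-((D⁻¹ * Bᴴ) *ᵥ x)) hD.1] at this
    simpa [dotProduct_mulVec] using this
  · intro h
    refine ⟨(Matrix.IsHermitian.fromBlocks₂₂ A B hD.1).mpr h.1, fun z hz => ?_⟩
    rw [dotProduct_mulVec, ← Sum.elim_comp_inl_inr z,
      schur_complement_eq₂₂ A B _ _ hD.1]
    by_cases hx : z ∘ Sum.inl = 0
    · have hy : z ∘ Sum.inr ≠ 0 := by
        intro hy
        apply hz
        funext i
        cases i with
        | inl i => exact congrFun hx i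
        | inr i => exact congrFun hy i
      have h1 : (0:ℝ) < star (z ∘ Sum.inr) ⬝ᵥ (D *ᵥ (z ∘ Sum.inr)) := (posDef_iff_dotProduct_mulVec.mp hD).2 hy
      rw [dotProduct_mulVec] at h1
      simp only [hx, mulVec_zero, zero_add, Pi.zero_apply]
      simpa [hx] using h1
    · have h1 : (0:ℝ) < star (z ∘ Sum.inl) ⬝ᵥ ((A - B * D⁻¹ * Bᴴ) *ᵥ (z ∘ Sum.inl)) := h.2 hx
      rw [dotProduct_mulVec] at h1
      have h2 : (0:ℝ) ≤ star ((D⁻¹ * Bᴴ) *ᵥ (z ∘ Sum.inl) + z ∘ Sum.inr) ᵥ*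
          D ⬝ᵥ ((D⁻¹ * Bᴴ) *ᵥ (z ∘ Sum.inl) + z ∘ Sum.inr) := by
        rw [← dotProduct_mulVec]
        exact (posSemidef_iff_dotProduct_mulVec.mp hD.posSemidef).2 _
      linarith
end aux


/-- The 2×2 block LMI is equivalent to the expanded 4×4 block LMI. -/
theorem lmi_2x2_iff_4x4
    (n m p : ℕ) (Φ : Matrix (Fin n) (Fin n) ℝ) (hΦs : Φ.IsSymm) (hΦ : Φ.PosDef) (η : ℝ)
    (A : Matrix (Fin n) (Fin n) ℝ) (B : Matrix (Fin n) (Fin m) ℝ)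
    (C : Matrix (Fin p) (Fin n) ℝ) (D : Matrix (Fin p) (Fin m) ℝ) :
    (fromBlocks (Aᵀ * Φ * A - Φ + Cᵀ * C) (Aᵀ * Φ * B + Cᵀ * D)
        (Bᵀ * Φ * A + Dᵀ * C) (Bᵀ * Φ * B + Dᵀ * D - η • 1)).NegDef ↔
      (blk4 (-Φ) 0 Aᵀ Cᵀ
            0 ((-η) • 1 : Matrix (Fin m) (Fin m) ℝ) Bᵀ Dᵀ
            A B (-Φ⁻¹) 0
            C D 0 (-1)).NegDef := by
  have hdet : IsUnit Φ.det := (Matrix.isUnit_iff_isUnit_det Φ).mp hΦ.isUnit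
  set X : Matrix (Fin n ⊕ Fin m) (Fin n ⊕ Fin m) ℝ := fromBlocks Φ 0 0 (η • 1) with hX
  set Y : Matrix (Fin n ⊕ Fin m) (Fin n ⊕ Fin p) ℝ := fromBlocks (-Aᵀ) (-Cᵀ) (-Bᵀ) (-Dᵀ) with hY
  set W : Matrix (Fin n ⊕ Fin p) (Fin n ⊕ Fin p) ℝ := fromBlocks Φ⁻¹ 0 0 1 with hW
  have hYH : Yᴴ = fromBlocks (-A) (-B) (-C) (-D) := by
    rw [conjTranspose_eq_transpose_of_trivial, hY, fromBlocks_transpose]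
    simp
  have hblk : (-(blk4 (-Φ) 0 Aᵀ Cᵀ
            0 ((-η) • 1 : Matrix (Fin m) (Fin m) ℝ) Bᵀ Dᵀ
            A B (-Φ⁻¹) 0
            C D 0 (-1))) = (fromBlocks X Y Yᴴ W).submatrix
        ((Equiv.sumAssoc (Fin n) (Fin m) (Fin n ⊕ Fin p)).symm)
        ((Equiv.sumAssoc (Fin n) (Fin m) (Fin n ⊕ Fin p)).symm) := by
    rw [hYH]
    ext i j
    rcases i with i | i | i | i <;> rcases j with j | j | j | j <;>
      simp [blk4, blk3, hX, hW, hY, Equiv.sumAssoc]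
  have hWpd : W.PosDef := by
    rw [hW, show (0 : Matrix (Fin p) (Fin n) ℝ) = (0 : Matrix (Fin n) (Fin p) ℝ)ᴴ from
      conjTranspose_zero.symm, posDef_fromBlocks₂₂' _ _ Matrix.PosDef.one]
    simpa using hΦ.inv
  have hWinv : W⁻¹ = fromBlocks Φ 0 0 1 := by
    apply inv_eq_right_inv
    rw [hW, fromBlocks_multiply, ← fromBlocks_one]
    simp [Matrix.nonsing_inv_mul Φ hdet]
  have hschur : X - Y * W⁻¹ * Yᴴ = -(fromBlocks (Aᵀ * Φ * A - Φ + Cᵀ * C) (Aᵀ * Φ * B + Cᵀ * D)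
        (Bᵀ * Φ * A + Dᵀ * C) (Bᵀ * Φ * B + Dᵀ * D - η • 1)) := by
    rw [hWinv, hYH, hX, hY, fromBlocks_multiply, fromBlocks_multiply, fromBlocks_neg,
      sub_eq_add_neg, fromBlocks_neg, fromBlocks_add]
    rw [fromBlocks_inj]
    refine ⟨?_, ?_, ?_, ?_⟩ <;>
      · simp only [Matrix.mul_zero, Matrix.zero_mul, Matrix.neg_mul, Matrix.mul_neg, neg_neg,
          add_zero, zero_add, Matrix.one_mul, Matrix.mul_one, Matrix.mul_assoc, neg_add_rev]
        try abel
  rw [Matrix.NegDef, Matrix.NegDef, hblk, posDef_submatrix_equiv',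
    posDef_fromBlocks₂₂' X Y hWpd, hschur]
end

section
/- Let A (n×n), B_w (n×m), B_u (n×q), C_z (p×n), D_zw (p×m), C_y (r×n), D_yw (r×m) be real matrices of a plant with D_zu = 0, and let T_u be an invertible real n×n matrix with T_u B_u = [[I_q], [0]]. Set Ā := T_u A T_u⁻¹, B̄_w := T_u B_w, C̄_z := C_z T_u⁻¹, C̄_y := C_y T_u⁻¹. Let η be a real number, Ψ a real symmetric positive definite m×m matrix, Φ̄ a real symmetric positive definite n×n matrix, S̄ the block-diagonal real n×n matrix with diagonal blocks S̄₁ (q×q, invertible) and S̄₂ ((n−q)×(n−q), invertible), and L := [[L₁], [0]] a real n×r matrix with top block L₁ (q×r). Suppose the symmetric block matrix with block rows [Ψ − η·I_m, (S̄B̄_w + LD_yw)ᵀ, D_zwᵀ], [S̄B̄_w + LD_yw, Φ̄ − S̄ − S̄ᵀ, 0], [D_zw, 0, −I_p] is negative definite, and the symmetric block matrix with block rows [−Φ̄, 0, (S̄Ā + LC̄_y)ᵀ, C̄_zᵀ], [0, −η·I_m, (S̄B̄_w + LD_yw)ᵀ, D_zwᵀ], [S̄Ā + LC̄_y, S̄B̄_w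 + LD_yw, Φ̄ − S̄ − S̄ᵀ, 0], [C̄_z, D_zw, 0, −I_p] is negative definite. Then, with K := S̄₁⁻¹L₁, Φ := T_uᵀ Φ̄ T_u, 𝒜 := A + B_uKC_y, ℬ := B_w + B_uKD_yw, 𝒞 := C_z, 𝒟 := D_zw, the matrix Φ is symmetric positive definite, the symmetric block matrix with block rows [Ψ − η·I_m, ℬᵀ, 𝒟ᵀ], [ℬ, −Φ⁻¹, 0], [𝒟, 0, −I_p] is negative definite, and the symmetric block matrix with block rows [−Φ, 0, 𝒜ᵀ, 𝒞ᵀ], [0, −η·I_m, ℬᵀ, 𝒟ᵀ], [𝒜, ℬ, −Φ⁻¹, 0], [𝒞, 𝒟, 0, −I_p] is negative definite. -/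
open Matrix

section Helpers

variable {R i1 i2 i3 i4 j1 j2 j3 j4 l1 l2 l3 l4 : Type*} [CommRing R]

lemma fromCols_add' {m : Type*} (A : Matrix m j1 R) (B : Matrix m j2 R)
    (C : Matrix m j1 R) (D : Matrix m j2 R) :
    fromCols A B + fromCols C D = fromCols (A + C) (B + D) := by
  ext _ (_ | _) <;> simp [fromCols]

lemma fromRows_add' {n : Type*} (A : Matrix i1 n R) (B : Matrix i2 n R)
    (C : Matrix i1 n R) (D : Matrix i2 n R) :
    fromRows A B + fromRows C D = fromRows (A + C) (B + D) := by
  ext (_ | _) _ <;> simp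

variable [Fintype j1] [Fintype j2] [Fintype j3] [Fintype j4]

lemma blk3_mul (A11 : Matrix i1 j1 R) (A12 : Matrix i1 j2 R) (A13 : Matrix i1 j3 R)
    (A21 : Matrix i2 j1 R) (A22 : Matrix i2 j2 R) (A23 : Matrix i2 j3 R)
    (A31 : Matrix i3 j1 R) (A32 : Matrix i3 j2 R) (A33 : Matrix i3 j3 R)
    (B11 : Matrix j1 l1 R) (B12 : Matrix j1 l2 R) (B13 : Matrix j1 l3 R)
    (B21 : Matrix j2 l1 R) (B22 : Matrix j2 l2 R) (B23 : Matrix j2 l3 R)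
    (B31 : Matrix j3 l1 R) (B32 : Matrix j3 l2 R) (B33 : Matrix j3 l3 R) :
    blk3 A11 A12 A13 A21 A22 A23 A31 A32 A33 * blk3 B11 B12 B13 B21 B22 B23 B31 B32 B33 =
    blk3 (A11*B11 + A12*B21 + A13*B31) (A11*B12 + A12*B22 + A13*B32) (A11*B13 + A12*B23 + A13*B33)
         (A21*B11 + A22*B21 + A23*B31) (A21*B12 + A22*B22 + A23*B32) (A21*B13 + A22*B23 + A23*B33)
         (A31*B11 + A32*B21 + A33*B31) (A31*B12 + A32*B22 + A33*B32) (A31*B13 + A32*B23 + A33*B33)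
    := by
  simp only [blk3, fromBlocks_multiply, fromCols_mul_fromRows, fromCols_mul_fromBlocks,
    fromBlocks_mul_fromRows, fromRows_mul, mul_fromCols, fromRows_mul_fromCols,
    fromCols_add', fromRows_add', fromBlocks_add, fromCols_fromRows_eq_fromBlocks]
  abel

set_option maxHeartbeats 2000000 in
lemma blk4_mul (A11 : Matrix i1 j1 R) (A12 : Matrix i1 j2 R) (A13 : Matrix i1 j3 R) (A14 : Matrix i1 j4 R)
    (A21 : Matrix i2 j1 R) (A22 : Matrix i2 j2 R) (A23 : Matrix i2 j3 R) (A24 : Matrix i2 j4 R)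
    (A31 : Matrix i3 j1 R) (A32 : Matrix i3 j2 R) (A33 : Matrix i3 j3 R) (A34 : Matrix i3 j4 R)
    (A41 : Matrix i4 j1 R) (A42 : Matrix i4 j2 R) (A43 : Matrix i4 j3 R) (A44 : Matrix i4 j4 R)
    (B11 : Matrix j1 l1 R) (B12 : Matrix j1 l2 R) (B13 : Matrix j1 l3 R) (B14 : Matrix j1 l4 R)
    (B21 : Matrix j2 l1 R) (B22 : Matrix j2 l2 R) (B23 : Matrix j2 l3 R) (B24 : Matrix j2 l4 R)
    (B31 : Matrix j3 l1 R) (B32 : Matrix j3 l2 R) (B33 : Matrix j3 l3 R) (B34 : Matrix j3 l4 R)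
    (B41 : Matrix j4 l1 R) (B42 : Matrix j4 l2 R) (B43 : Matrix j4 l3 R) (B44 : Matrix j4 l4 R) :
    blk4 A11 A12 A13 A14 A21 A22 A23 A24 A31 A32 A33 A34 A41 A42 A43 A44 *
      blk4 B11 B12 B13 B14 B21 B22 B23 B24 B31 B32 B33 B34 B41 B42 B43 B44 =
    blk4 (A11*B11 + A12*B21 + A13*B31 + A14*B41) (A11*B12 + A12*B22 + A13*B32 + A14*B42)
         (A11*B13 + A12*B23 + A13*B33 + A14*B43) (A11*B14 + A12*B24 + A13*B34 + A14*B44)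
         (A21*B11 + A22*B21 + A23*B31 + A24*B41) (A21*B12 + A22*B22 + A23*B32 + A24*B42)
         (A21*B13 + A22*B23 + A23*B33 + A24*B43) (A21*B14 + A22*B24 + A23*B34 + A24*B44)
         (A31*B11 + A32*B21 + A33*B31 + A34*B41) (A31*B12 + A32*B22 + A33*B32 + A34*B42)
         (A31*B13 + A32*B23 + A33*B33 + A34*B43) (A31*B14 + A32*B24 + A33*B34 + A34*B44)
         (A41*B11 + A42*B21 + A43*B31 + A44*B41) (A41*B12 + A42*B22 + A43*B32 + A44*B42)
         (A41*B13 + A42*B23 + A43*B33 + A44*B43) (A41*B14 + A42*B24 + A43*B34 + A44*B44) := by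
  simp only [blk4, blk3, fromBlocks_multiply, fromCols_mul_fromRows, fromCols_mul_fromBlocks,
    fromBlocks_mul_fromRows, fromRows_mul, mul_fromCols, fromRows_mul_fromCols,
    fromCols_add', fromRows_add', fromBlocks_add, fromCols_fromRows_eq_fromBlocks]
  ext (i | i | i | i) (j | j | j | j) <;>
    simp [fromBlocks, Matrix.add_apply] <;> ring

lemma blk3_transpose (A11 : Matrix i1 j1 R) (A12 : Matrix i1 j2 R) (A13 : Matrix i1 j3 R)
    (A21 : Matrix i2 j1 R) (A22 : Matrix i2 j2 R) (A23 : Matrix i2 j3 R)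
    (A31 : Matrix i3 j1 R) (A32 : Matrix i3 j2 R) (A33 : Matrix i3 j3 R) :
    (blk3 A11 A12 A13 A21 A22 A23 A31 A32 A33)ᵀ =
      blk3 A11ᵀ A21ᵀ A31ᵀ A12ᵀ A22ᵀ A32ᵀ A13ᵀ A23ᵀ A33ᵀ := by
  simp [blk3, fromBlocks_transpose, transpose_fromCols, transpose_fromRows]

lemma blk4_transpose (A11 : Matrix i1 j1 R) (A12 : Matrix i1 j2 R) (A13 : Matrix i1 j3 R) (A14 : Matrix i1 j4 R)
    (A21 : Matrix i2 j1 R) (A22 : Matrix i2 j2 R) (A23 : Matrix i2 j3 R) (A24 : Matrix i2 j4 R)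
    (A31 : Matrix i3 j1 R) (A32 : Matrix i3 j2 R) (A33 : Matrix i3 j3 R) (A34 : Matrix i3 j4 R)
    (A41 : Matrix i4 j1 R) (A42 : Matrix i4 j2 R) (A43 : Matrix i4 j3 R) (A44 : Matrix i4 j4 R) :
    (blk4 A11 A12 A13 A14 A21 A22 A23 A24 A31 A32 A33 A34 A41 A42 A43 A44)ᵀ =
      blk4 A11ᵀ A21ᵀ A31ᵀ A41ᵀ A12ᵀ A22ᵀ A32ᵀ A42ᵀ A13ᵀ A23ᵀ A33ᵀ A43ᵀ A14ᵀ A24ᵀ A34ᵀ A44ᵀ := by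
  simp [blk4, blk3, fromBlocks_transpose, transpose_fromCols, transpose_fromRows]

lemma blk3_one {q1 q2 q3 : Type*} [DecidableEq q1] [DecidableEq q2] [DecidableEq q3] :
    blk3 (1 : Matrix q1 q1 R) 0 0 0 (1 : Matrix q2 q2 R) 0 0 0 (1 : Matrix q3 q3 R) = 1 := by
  rw [blk3, show (fromCols (0 : Matrix q1 q2 R) (0 : Matrix q1 q3 R)) = 0 from fromCols_zero,
    show (fromRows (0 : Matrix q2 q1 R) (0 : Matrix q3 q1 R)) = 0 from fromRows_zero,
    fromBlocks_one, fromBlocks_one]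

lemma blk4_one {q1 q2 q3 q4 : Type*} [DecidableEq q1] [DecidableEq q2] [DecidableEq q3]
    [DecidableEq q4] :
    blk4 (1 : Matrix q1 q1 R) 0 0 0 0 (1 : Matrix q2 q2 R) 0 0 0 0 (1 : Matrix q3 q3 R) 0
      0 0 0 (1 : Matrix q4 q4 R) = 1 := by
  rw [blk4, blk3_one,
    show (fromCols (0 : Matrix q1 q2 R) (fromCols (0 : Matrix q1 q3 R) (0 : Matrix q1 q4 R)))
      = 0 by rw [fromCols_zero, fromCols_zero],
    show (fromRows (0 : Matrix q2 q1 R) (fromRows (0 : Matrix q3 q1 R) (0 : Matrix q4 q1 R)))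
      = 0 by rw [fromRows_zero, fromRows_zero], fromBlocks_one]

lemma posDef_conj {n : Type*} [Fintype n] [DecidableEq n] {M : Matrix n n ℝ} (hM : M.PosDef)
    {C : Matrix n n ℝ} (hC : IsUnit C) : (Cᵀ * M * C).PosDef := by
  have h := (isHermitian_conjTranspose_mul_mul C hM.1)
  rw [conjTranspose_eq_transpose_of_trivial] at h
  refine PosDef.of_dotProduct_mulVec_pos h (fun x hx => ?_)
  have hx' : C *ᵥ x ≠ 0 := by
    intro h0
    exact hx (Matrix.mulVec_injective_iff_isUnit.mpr hC (by simpa using h0))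
  have := hM.dotProduct_mulVec_pos hx'
  simpa only [star_trivial, ← mulVec_mulVec, dotProduct_mulVec, vecMul_transpose] using this

lemma posSemidef_fromBlocks_diag {n m : Type*} [Fintype n] [Fintype m]
    {A : Matrix n n ℝ} {D : Matrix m m ℝ} (hA : A.PosSemidef) (hD : D.PosSemidef) :
    (fromBlocks A 0 0 D).PosSemidef := by
  refine posSemidef_iff_dotProduct_mulVec.mpr ⟨?_, ?_⟩
  · simp [Matrix.IsHermitian, fromBlocks_conjTranspose, fromBlocks_transpose,
      conjTranspose_eq_transpose_of_trivial,
      show Aᵀ = A from by simpa [conjTranspose_eq_transpose_of_trivial] using hA.1.eq,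
      show Dᵀ = D from by simpa [conjTranspose_eq_transpose_of_trivial] using hD.1.eq]
  · intro x
    rw [show x = Sum.elim (x ∘ Sum.inl) (x ∘ Sum.inr) from (Sum.elim_comp_inl_inr x).symm]
    rw [fromBlocks_mulVec]
    simp only [zero_mulVec, add_zero, zero_add, star_trivial]
    rw [sumElim_dotProduct_sumElim]
    exact add_nonneg (by simpa using hA.dotProduct_mulVec_nonneg (x ∘ Sum.inl)) (by simpa using hD.dotProduct_mulVec_nonneg (x ∘ Sum.inr))

end Helpers

set_option maxHeartbeats 2000000 in
/-- Singular-control static output-feedback synthesis (`D_zu = 0`, `B_u` of full column rank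
normalized by `T_u`): feasibility of the slack-variable synthesis LMIs with structured
`S̄ = diag(S̄₁, S̄₂)` and `L = [L₁; 0]` yields the analysis LMIs for the closed-loop realization
with static gain `K = S̄₁⁻¹L₁` and Lyapunov matrix `Φ = T_uᵀ Φ̄ T_u`. The state space is indexed
by `Fin q ⊕ Fin k` (so `n = q + k`). -/
theorem singular_control_sof_synthesis
    (k q r m p : ℕ)
    (A : Matrix (Fin q ⊕ Fin k) (Fin q ⊕ Fin k) ℝ)
    (Bw : Matrix (Fin q ⊕ Fin k) (Fin m) ℝ)
    (Bu : Matrix (Fin q ⊕ Fin k) (Fin q) ℝ)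
    (Cz : Matrix (Fin p) (Fin q ⊕ Fin k) ℝ)
    (Dzw : Matrix (Fin p) (Fin m) ℝ)
    (Cy : Matrix (Fin r) (Fin q ⊕ Fin k) ℝ)
    (Dyw : Matrix (Fin r) (Fin m) ℝ)
    (Tu : Matrix (Fin q ⊕ Fin k) (Fin q ⊕ Fin k) ℝ) (hTu : IsUnit Tu)
    (hTuBu : Tu * Bu = fromRows (1 : Matrix (Fin q) (Fin q) ℝ) (0 : Matrix (Fin k) (Fin q) ℝ))
    (Abar : Matrix (Fin q ⊕ Fin k) (Fin q ⊕ Fin k) ℝ) (hAbar : Abar = Tu * A * Tu⁻¹)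
    (Bwbar : Matrix (Fin q ⊕ Fin k) (Fin m) ℝ) (hBwbar : Bwbar = Tu * Bw)
    (Czbar : Matrix (Fin p) (Fin q ⊕ Fin k) ℝ) (hCzbar : Czbar = Cz * Tu⁻¹)
    (Cybar : Matrix (Fin r) (Fin q ⊕ Fin k) ℝ) (hCybar : Cybar = Cy * Tu⁻¹)
    (η : ℝ) (Ψ : Matrix (Fin m) (Fin m) ℝ) (hΨs : Ψ.IsSymm) (hΨ : Ψ.PosDef)
    (Φbar : Matrix (Fin q ⊕ Fin k) (Fin q ⊕ Fin k) ℝ) (hΦbars : Φbar.IsSymm)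
    (hΦbar : Φbar.PosDef)
    (S1 : Matrix (Fin q) (Fin q) ℝ) (hS1 : IsUnit S1)
    (S2 : Matrix (Fin k) (Fin k) ℝ) (hS2 : IsUnit S2)
    (Sbar : Matrix (Fin q ⊕ Fin k) (Fin q ⊕ Fin k) ℝ) (hSbar : Sbar = fromBlocks S1 0 0 S2)
    (L1 : Matrix (Fin q) (Fin r) ℝ)
    (L : Matrix (Fin q ⊕ Fin k) (Fin r) ℝ)
    (hL : L = fromRows L1 (0 : Matrix (Fin k) (Fin r) ℝ))
    (h1 : (blk3 (Ψ - η • 1) (Sbar * Bwbar + L * Dyw)ᵀ Dzwᵀ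
                (Sbar * Bwbar + L * Dyw) (Φbar - Sbar - Sbarᵀ) 0
                Dzw 0 (-1)).NegDef)
    (h2 : (blk4 (-Φbar) 0 (Sbar * Abar + L * Cybar)ᵀ Czbarᵀ
                0 ((-η) • 1 : Matrix (Fin m) (Fin m) ℝ) (Sbar * Bwbar + L * Dyw)ᵀ Dzwᵀ
                (Sbar * Abar + L * Cybar) (Sbar * Bwbar + L * Dyw) (Φbar - Sbar - Sbarᵀ) 0
                Czbar Dzw 0 (-1)).NegDef)
    (K : Matrix (Fin q) (Fin r) ℝ) (hK : K = S1⁻¹ * L1)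
    (Φ : Matrix (Fin q ⊕ Fin k) (Fin q ⊕ Fin k) ℝ) (hΦ : Φ = Tuᵀ * Φbar * Tu)
    (𝒜 : Matrix (Fin q ⊕ Fin k) (Fin q ⊕ Fin k) ℝ) (h𝒜 : 𝒜 = A + Bu * K * Cy)
    (ℬ : Matrix (Fin q ⊕ Fin k) (Fin m) ℝ) (hℬ : ℬ = Bw + Bu * K * Dyw)
    (𝒞 : Matrix (Fin p) (Fin q ⊕ Fin k) ℝ) (h𝒞 : 𝒞 = Cz)
    (𝒟 : Matrix (Fin p) (Fin m) ℝ) (h𝒟 : 𝒟 = Dzw) :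
    Φ.IsSymm ∧ Φ.PosDef ∧
    (blk3 (Ψ - η • 1) ℬᵀ 𝒟ᵀ
          ℬ (-Φ⁻¹) 0
          𝒟 0 (-1)).NegDef ∧
    (blk4 (-Φ) 0 𝒜ᵀ 𝒞ᵀ
          0 ((-η) • 1 : Matrix (Fin m) (Fin m) ℝ) ℬᵀ 𝒟ᵀ
          𝒜 ℬ (-Φ⁻¹) 0
          𝒞 𝒟 0 (-1)).NegDef := by

  haveI iTu : Invertible Tu := hTu.invertible
  haveI iS1 : Invertible S1 := hS1.invertible
  have hSbarU : IsUnit Sbar := by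
    rw [hSbar, Matrix.isUnit_iff_isUnit_det, Matrix.det_fromBlocks_zero₂₁]
    exact (((Matrix.isUnit_iff_isUnit_det S1).mp hS1).mul
      ((Matrix.isUnit_iff_isUnit_det S2).mp hS2))
  haveI iSbar : Invertible Sbar := hSbarU.invertible
  haveI iΦbar : Invertible Φbar := hΦbar.isUnit.invertible
  haveI iG : Invertible (Sbar * Tu) := invertibleMul _ _
  rw [← h𝒟] at h1 h2
  rw [show Czbar = 𝒞 * Tu⁻¹ from by rw [hCzbar, h𝒞]] at h2
  -- key algebraic identities
  have hTuBuK : Sbar * Tu * Bu * K = L := by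
    rw [Matrix.mul_assoc Sbar Tu Bu, hTuBu, hSbar, fromBlocks_mul_fromRows, hK, hL]
    simp [Matrix.mul_inv_cancel_left_of_invertible]
  have hWc : Sbar * Bwbar + L * Dyw = Sbar * Tu * ℬ := by
    rw [hBwbar, ← hTuBuK, hℬ]
    simp only [Matrix.mul_add, Matrix.mul_assoc]
  have hAc : Sbar * Abar + L * Cybar = Sbar * Tu * 𝒜 * Tu⁻¹ := by
    rw [hAbar, ← hTuBuK, hCybar, h𝒜]
    simp only [Matrix.mul_add, Matrix.add_mul, Matrix.mul_assoc]
  -- Lyapunov matrix facts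
  have hΦsym : Φ.IsSymm := by
    have : (Tuᵀ * Φbar * Tu)ᵀ = Tuᵀ * Φbar * Tu := by
      simp [Matrix.transpose_mul, Matrix.mul_assoc, hΦbars.eq]
    rw [hΦ]; exact this
  have hΦpd : Φ.PosDef := by rw [hΦ]; exact posDef_conj hΦbar hTu
  -- slack-variable bound
  have hNpsd : ((Sbar - Φbar) * Φbar⁻¹ * (Sbar - Φbar)ᵀ).PosSemidef := by
    have := (hΦbar.inv.posSemidef).mul_mul_conjTranspose_same (Sbar - Φbar)
    rwa [conjTranspose_eq_transpose_of_trivial] at this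
  have hNeq : (Sbar - Φbar) * Φbar⁻¹ * (Sbar - Φbar)ᵀ =
      Sbar * Φbar⁻¹ * Sbarᵀ - Sbar - Sbarᵀ + Φbar := by
    rw [Matrix.transpose_sub, hΦbars.eq]
    simp only [Matrix.sub_mul, Matrix.mul_sub, Matrix.mul_assoc,
      Matrix.inv_mul_of_invertible, Matrix.mul_inv_cancel_left_of_invertible, Matrix.mul_one]
    abel
  have hZ : Φbar - Sbar - Sbarᵀ = -(Sbar * Φbar⁻¹ * Sbarᵀ) +
      (Sbar - Φbar) * Φbar⁻¹ * (Sbar - Φbar)ᵀ := by rw [hNeq]; abel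
  have hCmT : (((Sbar * Tu)ᵀ)⁻¹)ᵀ = (Sbar * Tu)⁻¹ := by
    rw [← Matrix.transpose_nonsing_inv, Matrix.transpose_transpose]
  refine ⟨hΦsym, hΦpd, ?_, ?_⟩
  · -- first LMI
    unfold Matrix.NegDef at h1 ⊢
    rw [hWc, hZ] at h1
    have hEpsd : (blk3 (0 : Matrix (Fin m) (Fin m) ℝ) 0 0
        0 ((Sbar - Φbar) * Φbar⁻¹ * (Sbar - Φbar)ᵀ) 0
        0 0 (0 : Matrix (Fin p) (Fin p) ℝ)).PosSemidef := by
      unfold blk3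
      rw [fromCols_zero, fromRows_zero]
      exact posSemidef_fromBlocks_diag .zero (posSemidef_fromBlocks_diag hNpsd .zero)
    have hM1' : (-(blk3 (Ψ - η • 1) (Sbar * Tu * ℬ)ᵀ 𝒟ᵀ
        (Sbar * Tu * ℬ) (-(Sbar * Φbar⁻¹ * Sbarᵀ)) 0
        𝒟 0 (-1))).PosDef := by
      have heq : -(blk3 (Ψ - η • 1) (Sbar * Tu * ℬ)ᵀ 𝒟ᵀ
          (Sbar * Tu * ℬ) (-(Sbar * Φbar⁻¹ * Sbarᵀ)) 0
          𝒟 0 (-1)) =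
          -(blk3 (Ψ - η • 1) (Sbar * Tu * ℬ)ᵀ 𝒟ᵀ
          (Sbar * Tu * ℬ) (-(Sbar * Φbar⁻¹ * Sbarᵀ) +
            (Sbar - Φbar) * Φbar⁻¹ * (Sbar - Φbar)ᵀ) 0
          𝒟 0 (-1)) +
          blk3 (0 : Matrix (Fin m) (Fin m) ℝ) 0 0
            0 ((Sbar - Φbar) * Φbar⁻¹ * (Sbar - Φbar)ᵀ) 0
            0 0 (0 : Matrix (Fin p) (Fin p) ℝ) := by
        ext (i | i | i) (j | j | j) <;>
          simp [blk3, fromBlocks, Matrix.add_apply] <;> ring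
      rw [heq]
      exact h1.add_posSemidef hEpsd
    have hC3U : IsUnit (blk3 (1 : Matrix (Fin m) (Fin m) ℝ) 0 0
        0 (((Sbar * Tu)ᵀ)⁻¹) 0 0 0 (1 : Matrix (Fin p) (Fin p) ℝ)) := by
      refine (Matrix.isUnit_iff_isUnit_det _).mpr (Matrix.isUnit_det_of_right_inverse
        (B := blk3 (1 : Matrix (Fin m) (Fin m) ℝ) 0 0
          0 ((Sbar * Tu)ᵀ) 0 0 0 (1 : Matrix (Fin p) (Fin p) ℝ)) ?_)
      rw [blk3_mul]
      simp only [Matrix.one_mul, Matrix.mul_one, Matrix.zero_mul, Matrix.mul_zero,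
        add_zero, zero_add, Matrix.inv_mul_of_invertible]
      exact blk3_one
    have hcong : (blk3 (1 : Matrix (Fin m) (Fin m) ℝ) 0 0
          0 (((Sbar * Tu)ᵀ)⁻¹) 0 0 0 (1 : Matrix (Fin p) (Fin p) ℝ))ᵀ *
        (blk3 (Ψ - η • 1) (Sbar * Tu * ℬ)ᵀ 𝒟ᵀ
          (Sbar * Tu * ℬ) (-(Sbar * Φbar⁻¹ * Sbarᵀ)) 0
          𝒟 0 (-1)) *
        (blk3 (1 : Matrix (Fin m) (Fin m) ℝ) 0 0
          0 (((Sbar * Tu)ᵀ)⁻¹) 0 0 0 (1 : Matrix (Fin p) (Fin p) ℝ)) =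
        blk3 (Ψ - η • 1) ℬᵀ 𝒟ᵀ ℬ (-Φ⁻¹) 0 𝒟 0 (-1) := by
      rw [blk3_transpose]
      simp only [Matrix.transpose_one, Matrix.transpose_zero, hCmT]
      rw [blk3_mul, blk3_mul]
      simp only [Matrix.one_mul, Matrix.mul_one, Matrix.zero_mul, Matrix.mul_zero,
        add_zero, zero_add]
      congr 1 <;>
      simp only [hΦ, Matrix.transpose_mul, Matrix.transpose_nonsing_inv, Matrix.mul_inv_rev,
        Matrix.transpose_transpose, Matrix.neg_mul, Matrix.mul_neg, neg_neg, neg_inj,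
        Matrix.mul_assoc, Matrix.inv_mul_cancel_left_of_invertible,
        Matrix.mul_inv_cancel_left_of_invertible, Matrix.mul_inv_of_invertible,
        Matrix.inv_mul_of_invertible, Matrix.mul_one, Matrix.one_mul]
    rw [← hcong, show -((blk3 (1 : Matrix (Fin m) (Fin m) ℝ) 0 0
          0 (((Sbar * Tu)ᵀ)⁻¹) 0 0 0 (1 : Matrix (Fin p) (Fin p) ℝ))ᵀ *
        (blk3 (Ψ - η • 1) (Sbar * Tu * ℬ)ᵀ 𝒟ᵀ
          (Sbar * Tu * ℬ) (-(Sbar * Φbar⁻¹ * Sbarᵀ)) 0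
          𝒟 0 (-1)) *
        (blk3 (1 : Matrix (Fin m) (Fin m) ℝ) 0 0
          0 (((Sbar * Tu)ᵀ)⁻¹) 0 0 0 (1 : Matrix (Fin p) (Fin p) ℝ))) =
        (blk3 (1 : Matrix (Fin m) (Fin m) ℝ) 0 0
          0 (((Sbar * Tu)ᵀ)⁻¹) 0 0 0 (1 : Matrix (Fin p) (Fin p) ℝ))ᵀ *
        (-(blk3 (Ψ - η • 1) (Sbar * Tu * ℬ)ᵀ 𝒟ᵀ
          (Sbar * Tu * ℬ) (-(Sbar * Φbar⁻¹ * Sbarᵀ)) 0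
          𝒟 0 (-1))) *
        (blk3 (1 : Matrix (Fin m) (Fin m) ℝ) 0 0
          0 (((Sbar * Tu)ᵀ)⁻¹) 0 0 0 (1 : Matrix (Fin p) (Fin p) ℝ))
      by simp [Matrix.neg_mul, Matrix.mul_neg]]
    exact posDef_conj hM1' hC3U
  · -- second LMI
    unfold Matrix.NegDef at h2 ⊢
    rw [hWc, hAc, hZ] at h2
    have hEpsd : (blk4 (0 : Matrix (Fin q ⊕ Fin k) (Fin q ⊕ Fin k) ℝ) 0 0 0
        0 (0 : Matrix (Fin m) (Fin m) ℝ) 0 0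
        0 0 ((Sbar - Φbar) * Φbar⁻¹ * (Sbar - Φbar)ᵀ) 0
        0 0 0 (0 : Matrix (Fin p) (Fin p) ℝ)).PosSemidef := by
      unfold blk4 blk3
      rw [fromCols_zero, fromCols_zero, fromRows_zero, fromRows_zero,
        fromCols_zero, fromRows_zero]
      exact posSemidef_fromBlocks_diag .zero
        (posSemidef_fromBlocks_diag .zero (posSemidef_fromBlocks_diag hNpsd .zero))
    have hM2' : (-(blk4 (-Φbar) 0 (Sbar * Tu * 𝒜 * Tu⁻¹)ᵀ (𝒞 * Tu⁻¹)ᵀ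
        0 ((-η) • 1 : Matrix (Fin m) (Fin m) ℝ) (Sbar * Tu * ℬ)ᵀ 𝒟ᵀ
        (Sbar * Tu * 𝒜 * Tu⁻¹) (Sbar * Tu * ℬ) (-(Sbar * Φbar⁻¹ * Sbarᵀ)) 0
        (𝒞 * Tu⁻¹) 𝒟 0 (-1))).PosDef := by
      have heq : -(blk4 (-Φbar) 0 (Sbar * Tu * 𝒜 * Tu⁻¹)ᵀ (𝒞 * Tu⁻¹)ᵀ
          0 ((-η) • 1 : Matrix (Fin m) (Fin m) ℝ) (Sbar * Tu * ℬ)ᵀ 𝒟ᵀ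
          (Sbar * Tu * 𝒜 * Tu⁻¹) (Sbar * Tu * ℬ) (-(Sbar * Φbar⁻¹ * Sbarᵀ)) 0
          (𝒞 * Tu⁻¹) 𝒟 0 (-1)) =
          -(blk4 (-Φbar) 0 (Sbar * Tu * 𝒜 * Tu⁻¹)ᵀ (𝒞 * Tu⁻¹)ᵀ
          0 ((-η) • 1 : Matrix (Fin m) (Fin m) ℝ) (Sbar * Tu * ℬ)ᵀ 𝒟ᵀ
          (Sbar * Tu * 𝒜 * Tu⁻¹) (Sbar * Tu * ℬ)
            (-(Sbar * Φbar⁻¹ * Sbarᵀ) + (Sbar - Φbar) * Φbar⁻¹ * (Sbar - Φbar)ᵀ) 0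
          (𝒞 * Tu⁻¹) 𝒟 0 (-1)) +
          blk4 (0 : Matrix (Fin q ⊕ Fin k) (Fin q ⊕ Fin k) ℝ) 0 0 0
            0 (0 : Matrix (Fin m) (Fin m) ℝ) 0 0
            0 0 ((Sbar - Φbar) * Φbar⁻¹ * (Sbar - Φbar)ᵀ) 0
            0 0 0 (0 : Matrix (Fin p) (Fin p) ℝ) := by
        ext (i | i | i | i) (j | j | j | j) <;>
          simp [blk4, blk3, fromBlocks, Matrix.add_apply] <;> ring
      rw [heq]
      exact h2.add_posSemidef hEpsd
    have hC4U : IsUnit (blk4 Tu 0 0 0 0 (1 : Matrix (Fin m) (Fin m) ℝ) 0 0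
        0 0 (((Sbar * Tu)ᵀ)⁻¹) 0 0 0 0 (1 : Matrix (Fin p) (Fin p) ℝ)) := by
      refine (Matrix.isUnit_iff_isUnit_det _).mpr (Matrix.isUnit_det_of_right_inverse
        (B := blk4 Tu⁻¹ 0 0 0 0 (1 : Matrix (Fin m) (Fin m) ℝ) 0 0
          0 0 ((Sbar * Tu)ᵀ) 0 0 0 0 (1 : Matrix (Fin p) (Fin p) ℝ)) ?_)
      rw [blk4_mul]
      simp only [Matrix.one_mul, Matrix.mul_one, Matrix.zero_mul, Matrix.mul_zero,
        add_zero, zero_add, Matrix.inv_mul_of_invertible, Matrix.mul_inv_of_invertible]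
      exact blk4_one
    have hcong : (blk4 Tu 0 0 0 0 (1 : Matrix (Fin m) (Fin m) ℝ) 0 0
          0 0 (((Sbar * Tu)ᵀ)⁻¹) 0 0 0 0 (1 : Matrix (Fin p) (Fin p) ℝ))ᵀ *
        (blk4 (-Φbar) 0 (Sbar * Tu * 𝒜 * Tu⁻¹)ᵀ (𝒞 * Tu⁻¹)ᵀ
          0 ((-η) • 1 : Matrix (Fin m) (Fin m) ℝ) (Sbar * Tu * ℬ)ᵀ 𝒟ᵀ
          (Sbar * Tu * 𝒜 * Tu⁻¹) (Sbar * Tu * ℬ) (-(Sbar * Φbar⁻¹ * Sbarᵀ)) 0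
          (𝒞 * Tu⁻¹) 𝒟 0 (-1)) *
        (blk4 Tu 0 0 0 0 (1 : Matrix (Fin m) (Fin m) ℝ) 0 0
          0 0 (((Sbar * Tu)ᵀ)⁻¹) 0 0 0 0 (1 : Matrix (Fin p) (Fin p) ℝ)) =
        blk4 (-Φ) 0 𝒜ᵀ 𝒞ᵀ
          0 ((-η) • 1 : Matrix (Fin m) (Fin m) ℝ) ℬᵀ 𝒟ᵀ
          𝒜 ℬ (-Φ⁻¹) 0
          𝒞 𝒟 0 (-1) := by
      rw [blk4_transpose]
      simp only [Matrix.transpose_one, Matrix.transpose_zero, hCmT]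
      rw [blk4_mul, blk4_mul]
      simp only [Matrix.one_mul, Matrix.mul_one, Matrix.zero_mul, Matrix.mul_zero,
        add_zero, zero_add]
      congr 1 <;>
      simp only [hΦ, Matrix.transpose_mul, Matrix.transpose_nonsing_inv,
        Matrix.mul_inv_rev, Matrix.transpose_transpose, Matrix.neg_mul, Matrix.mul_neg,
        neg_neg, neg_inj, Matrix.mul_assoc, Matrix.inv_mul_cancel_left_of_invertible,
        Matrix.mul_inv_cancel_left_of_invertible, Matrix.mul_inv_of_invertible,
        Matrix.inv_mul_of_invertible, Matrix.mul_one, Matrix.one_mul]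
    rw [← hcong, show -((blk4 Tu 0 0 0 0 (1 : Matrix (Fin m) (Fin m) ℝ) 0 0
          0 0 (((Sbar * Tu)ᵀ)⁻¹) 0 0 0 0 (1 : Matrix (Fin p) (Fin p) ℝ))ᵀ *
        (blk4 (-Φbar) 0 (Sbar * Tu * 𝒜 * Tu⁻¹)ᵀ (𝒞 * Tu⁻¹)ᵀ
          0 ((-η) • 1 : Matrix (Fin m) (Fin m) ℝ) (Sbar * Tu * ℬ)ᵀ 𝒟ᵀ
          (Sbar * Tu * 𝒜 * Tu⁻¹) (Sbar * Tu * ℬ) (-(Sbar * Φbar⁻¹ * Sbarᵀ)) 0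
          (𝒞 * Tu⁻¹) 𝒟 0 (-1)) *
        (blk4 Tu 0 0 0 0 (1 : Matrix (Fin m) (Fin m) ℝ) 0 0
          0 0 (((Sbar * Tu)ᵀ)⁻¹) 0 0 0 0 (1 : Matrix (Fin p) (Fin p) ℝ))) =
        (blk4 Tu 0 0 0 0 (1 : Matrix (Fin m) (Fin m) ℝ) 0 0
          0 0 (((Sbar * Tu)ᵀ)⁻¹) 0 0 0 0 (1 : Matrix (Fin p) (Fin p) ℝ))ᵀ *
        (-(blk4 (-Φbar) 0 (Sbar * Tu * 𝒜 * Tu⁻¹)ᵀ (𝒞 * Tu⁻¹)ᵀ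
          0 ((-η) • 1 : Matrix (Fin m) (Fin m) ℝ) (Sbar * Tu * ℬ)ᵀ 𝒟ᵀ
          (Sbar * Tu * 𝒜 * Tu⁻¹) (Sbar * Tu * ℬ) (-(Sbar * Φbar⁻¹ * Sbarᵀ)) 0
          (𝒞 * Tu⁻¹) 𝒟 0 (-1))) *
        (blk4 Tu 0 0 0 0 (1 : Matrix (Fin m) (Fin m) ℝ) 0 0
          0 0 (((Sbar * Tu)ᵀ)⁻¹) 0 0 0 0 (1 : Matrix (Fin p) (Fin p) ℝ))
      by simp [Matrix.neg_mul, Matrix.mul_neg]]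
    exact posDef_conj hM2' hC4U
end
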